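/- For the threshold graphon W(x,y) = 1_{⟨x,y⟩ ≥ τ} on B^d with measure F_ν and 0 < τ < 1, the map t ↦ d_W(tN) is strictly increasing on (τ, 1], where N is a fixed unit vector. -/

import Mathlib

open MeasureTheory Real
open scoped RealInnerProductSpace ENNReal

/-- The probability measure `F_ν` on the unit ball of `ℝ^d` with density
proportional to `(1 - ‖x‖²)^(ν - 1/2)` with respect to Lebesgue measure. -/
noncomputable def Fnu (d : ℕ) (ν : ℝ) : Measure (EuclideanSpace ℝ (Fin d)) :=
  letI base : Measure (EuclideanSpace ℝ (Fin d)) :=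
    (volume.restrict (Metric.closedBall 0 1)).withDensity
      (fun x => ENNReal.ofReal ((1 - ‖x‖ ^ 2) ^ (ν - 1 / 2)))
  (base Set.univ)⁻¹ • base

/-- The degree function of the threshold graphon `W(x,y) = 1_{⟨x,y⟩ ≥ τ}`
on the unit ball, with latent measure `F_ν`. -/
noncomputable def degW (d : ℕ) (ν τ : ℝ) (x : EuclideanSpace ℝ (Fin d)) : ℝ :=
  (Fnu d ν {y | τ ≤ ⟪x, y⟫}).toReal

/-- The regularized incomplete Beta function
`I(x; a, b) = (1/B(a,b)) ∫_0^x t^(a-1) (1-t)^(b-1) dt`. -/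
noncomputable def regIncBeta (x a b : ℝ) : ℝ :=
  (∫ t in (0 : ℝ)..x, t ^ (a - 1) * (1 - t) ^ (b - 1)) * Real.Gamma (a + b) /
    (Real.Gamma a * Real.Gamma b)

namespace DegWAux

/-- The unnormalized "base" measure. -/
noncomputable def base (d : ℕ) (ν : ℝ) : Measure (EuclideanSpace ℝ (Fin d)) :=
  (volume.restrict (Metric.closedBall 0 1)).withDensity
    (fun x => ENNReal.ofReal ((1 - ‖x‖ ^ 2) ^ (ν - 1 / 2)))

lemma Fnu_eq (d : ℕ) (ν : ℝ) :
    Fnu d ν = (base d ν Set.univ)⁻¹ • base d ν := rfl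

variable {d : ℕ} {ν : ℝ}

lemma measurable_dens :
    Measurable (fun x : EuclideanSpace ℝ (Fin d) =>
      ENNReal.ofReal ((1 - ‖x‖ ^ 2) ^ (ν - 1 / 2))) := by
  fun_prop

lemma base_apply {s : Set (EuclideanSpace ℝ (Fin d))} (hs : MeasurableSet s) :
    base d ν s = ∫⁻ x in s ∩ Metric.closedBall 0 1,
      ENNReal.ofReal ((1 - ‖x‖ ^ 2) ^ (ν - 1 / 2)) := by
  rw [base, withDensity_apply _ hs, Measure.restrict_restrict hs]

lemma base_open_pos {U : Set (EuclideanSpace ℝ (Fin d))} (hU : IsOpen U)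
    (hne : U.Nonempty) (hsub : U ⊆ Metric.ball 0 1) : 0 < base d ν U := by
  have hsub' : U ⊆ Metric.closedBall 0 1 := hsub.trans Metric.ball_subset_closedBall
  rw [base_apply hU.measurableSet, Set.inter_eq_left.mpr hsub',
    lintegral_pos_iff_support measurable_dens, Measure.restrict_apply' hU.measurableSet]
  refine (hU.measure_pos volume hne).trans_le (measure_mono fun x hx => ⟨?_, hx⟩)
  have hx1 : ‖x‖ < 1 := mem_ball_zero_iff.mp (hsub hx)
  have h0 : (0 : ℝ) < 1 - ‖x‖ ^ 2 := by nlinarith [norm_nonneg x]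
  simp only [Function.mem_support, ne_eq, ENNReal.ofReal_eq_zero, not_le]
  exact Real.rpow_pos_of_pos h0 _

lemma base_univ_ne_zero : base d ν Set.univ ≠ 0 := by
  have h : 0 < base d ν (Metric.ball 0 1) :=
    base_open_pos Metric.isOpen_ball ⟨0, Metric.mem_ball_self one_pos⟩ subset_rfl
  exact (h.trans_le (measure_mono (Set.subset_univ _))).ne'

lemma base_univ_lt_top (hd : 0 < d) (hν : -1 / 2 < ν) : base d ν Set.univ < ⊤ := by
  classical
  set E := EuclideanSpace ℝ (Fin d)
  set p : ℝ := ν - 1 / 2 with hpdef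
  have hp1 : (-1 : ℝ) < p := by rw [hpdef]; linarith
  rw [base_apply MeasurableSet.univ, Set.univ_inter]
  rcases le_or_gt 0 p with hp0 | hp0
  · -- bounded density
    calc ∫⁻ x in Metric.closedBall (0 : E) 1, ENNReal.ofReal ((1 - ‖x‖ ^ 2) ^ p)
        ≤ ∫⁻ _ in Metric.closedBall (0 : E) 1, 1 ∂volume := by
          refine setLIntegral_mono measurable_const fun x hx => ?_
          have hx1 : ‖x‖ ≤ 1 := mem_closedBall_zero_iff.mp hx
          have h0 : (0 : ℝ) ≤ 1 - ‖x‖ ^ 2 := by nlinarith [norm_nonneg x]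
          have h1 : (1 : ℝ) - ‖x‖ ^ 2 ≤ 1 := by nlinarith [norm_nonneg x]
          exact ENNReal.ofReal_le_one.mpr (Real.rpow_le_one h0 h1 hp0)
      _ = volume (Metric.closedBall (0 : E) 1) := setLIntegral_one _
      _ < ⊤ := measure_closedBall_lt_top
  · -- p < 0 : polar coordinates
    haveI : Nontrivial E := Module.nontrivial_of_finrank_pos (R := ℝ)
      (by rw [finrank_euclideanSpace_fin]; exact hd)
    set G : ℝ → ℝ≥0∞ :=
      Set.indicator (Set.Iic 1) (fun r => ENNReal.ofReal ((1 - r ^ 2) ^ p)) with hG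
    have hGmeas : Measurable G :=
      Measurable.indicator (by fun_prop) measurableSet_Iic
    have hGx : ∀ x : E,
        (Metric.closedBall (0 : E) 1).indicator
          (fun x => ENNReal.ofReal ((1 - ‖x‖ ^ 2) ^ p)) x = G ‖x‖ := by
      intro x
      by_cases hx : ‖x‖ ≤ 1 <;>
        simp [hG, Set.indicator, mem_closedBall_zero_iff, hx]
    have key : ∫⁻ x in Metric.closedBall (0 : E) 1,
        ENNReal.ofReal ((1 - ‖x‖ ^ 2) ^ p) ∂volume = ∫⁻ x : E, G ‖x‖ := by
      rw [← lintegral_indicator measurableSet_closedBall]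
      exact lintegral_congr hGx
    rw [key]
    have hGsnd : Measurable fun z : Metric.sphere (0 : E) 1 × Set.Ioi (0 : ℝ) => G z.2.1 :=
      hGmeas.comp (measurable_subtype_coe.comp measurable_snd)
    have hmp := Measure.measurePreserving_homeomorphUnitSphereProd (volume : Measure E)
    have hradial : ∫⁻ r : Set.Ioi (0 : ℝ), G r.1
        ∂(Measure.volumeIoiPow (Module.finrank ℝ E - 1)) < ⊤ := by
      rw [Measure.volumeIoiPow,
        lintegral_withDensity_eq_lintegral_mul _
          (f := fun r : Set.Ioi (0:ℝ) => ENNReal.ofReal (r.1 ^ (Module.finrank ℝ E - 1)))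
          (by fun_prop)
          (g := fun r : Set.Ioi (0:ℝ) => G r.1) (hGmeas.comp measurable_subtype_coe)]
      simp only [Pi.mul_apply]
      rw [lintegral_subtype_comap measurableSet_Ioi
        (fun r : ℝ => ENNReal.ofReal (r ^ (Module.finrank ℝ E - 1)) * G r)]
      set n : ℕ := Module.finrank ℝ E - 1
      have hbound : ∀ r ∈ Set.Ioi (0 : ℝ),
          ENNReal.ofReal (r ^ n) * G r ≤
            (Set.Ioc (0:ℝ) 1).indicator (fun r => ENNReal.ofReal ((1 - r) ^ p)) r := by
        intro r hr
        have hr0 : (0 : ℝ) < r := hr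
        by_cases hr1 : r ≤ 1
        · have hGr : G r = ENNReal.ofReal ((1 - r ^ 2) ^ p) := by
            simp [hG, Set.indicator, hr1]
          have hind : (Set.Ioc (0:ℝ) 1).indicator
              (fun r => ENNReal.ofReal ((1 - r) ^ p)) r = ENNReal.ofReal ((1 - r) ^ p) := by
            simp [Set.indicator, hr0, hr1]
          rw [hGr, hind]
          have h1 : ENNReal.ofReal (r ^ n) ≤ 1 :=
            ENNReal.ofReal_le_one.mpr (pow_le_one₀ hr0.le hr1)
          have h2 : ENNReal.ofReal ((1 - r ^ 2) ^ p) ≤ ENNReal.ofReal ((1 - r) ^ p) := by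
            rcases eq_or_lt_of_le hr1 with h | h
            · subst h
              simp [Real.zero_rpow hp0.ne]
            · refine ENNReal.ofReal_le_ofReal ?_
              have h3 : (0:ℝ) < 1 - r := by linarith
              have h4 : (1:ℝ) - r ≤ 1 - r ^ 2 := by nlinarith
              exact Real.rpow_le_rpow_of_nonpos h3 h4 hp0.le
          calc ENNReal.ofReal (r ^ n) * ENNReal.ofReal ((1 - r ^ 2) ^ p)
              ≤ 1 * ENNReal.ofReal ((1 - r) ^ p) := mul_le_mul' h1 h2
            _ = ENNReal.ofReal ((1 - r) ^ p) := one_mul _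
        · have hGr : G r = 0 := by
            simp [hG, Set.indicator, hr1]
          simp [hGr]
      calc ∫⁻ r in Set.Ioi (0:ℝ), ENNReal.ofReal (r ^ n) * G r
          ≤ ∫⁻ r in Set.Ioi (0:ℝ),
              (Set.Ioc (0:ℝ) 1).indicator (fun r => ENNReal.ofReal ((1 - r) ^ p)) r :=
            setLIntegral_mono (Measurable.indicator (by fun_prop) measurableSet_Ioc) hbound
        _ = ∫⁻ r in Set.Ioc (0:ℝ) 1, ENNReal.ofReal ((1 - r) ^ p) := by
            rw [lintegral_indicator measurableSet_Ioc, Measure.restrict_restrict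
              measurableSet_Ioc, Set.inter_eq_left.mpr Set.Ioc_subset_Ioi_self]
        _ < ⊤ := by
            have hi : IntervalIntegrable (fun x : ℝ => x ^ p) volume 0 1 :=
              intervalIntegral.intervalIntegrable_rpow' hp1
            have hi2 : IntervalIntegrable (fun x : ℝ => (1 - x) ^ p) volume 0 1 := by
              simpa using (hi.comp_sub_left 1).symm
            have hOn : IntegrableOn (fun x : ℝ => (1 - x) ^ p) (Set.Ioc 0 1) volume :=
              (intervalIntegrable_iff_integrableOn_Ioc_of_le zero_le_one).mp hi2
            refine lt_of_le_of_lt (lintegral_mono fun r => ?_) hOn.2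
            rw [← ofReal_norm]
            exact ENNReal.ofReal_le_ofReal (le_abs_self _)
    calc ∫⁻ x : E, G ‖x‖
        = ∫⁻ x in ({(0 : E)}ᶜ : Set E), G ‖x‖ := by
          rw [restrict_compl_singleton]
      _ = ∫⁻ x : ({(0 : E)}ᶜ : Set E), G ‖x.1‖ ∂(Measure.comap Subtype.val volume) :=
          (lintegral_subtype_comap (measurableSet_singleton (0:E)).compl
            (fun x : E => G ‖x‖)).symm
      _ = ∫⁻ z : Metric.sphere (0 : E) 1 × Set.Ioi (0 : ℝ), G z.2.1
            ∂((volume : Measure E).toSphere.prod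
              (Measure.volumeIoiPow (Module.finrank ℝ E - 1))) := by
          rw [← hmp.lintegral_comp
            (f := fun z : Metric.sphere (0 : E) 1 × Set.Ioi (0 : ℝ) => G z.2.1) hGsnd]
          refine lintegral_congr fun x => ?_
          rw [homeomorphUnitSphereProd_apply_snd_coe]
      _ = ∫⁻ s : Metric.sphere (0 : E) 1,
            (∫⁻ r : Set.Ioi (0:ℝ), G r.1
              ∂(Measure.volumeIoiPow (Module.finrank ℝ E - 1)))
            ∂(volume : Measure E).toSphere := by
          rw [lintegral_prod _ hGsnd.aemeasurable]
      _ = (∫⁻ r : Set.Ioi (0:ℝ), G r.1 ∂(Measure.volumeIoiPow (Module.finrank ℝ E - 1))) *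
            (volume : Measure E).toSphere Set.univ := lintegral_const _
      _ < ⊤ := ENNReal.mul_lt_top hradial (measure_lt_top _ _)

end DegWAux

/-- For the threshold graphon on the unit ball with measure `F_ν` and `0 < τ < 1`,
the map `t ↦ d_W(t • N)` is strictly increasing on `(τ, 1]`, for a fixed unit
vector `N`. -/
theorem degW_strictMonoOn (d : ℕ) (hd : 0 < d) (ν τ : ℝ) (hν : -1 / 2 < ν)
    (hτ0 : 0 < τ) (hτ1 : τ < 1)
    (N : EuclideanSpace ℝ (Fin d)) (hN : ‖N‖ = 1) :
    StrictMonoOn (fun t : ℝ => degW d ν τ (t • N)) (Set.Ioc τ 1) := by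
  classical
  have hν' : -1 / 2 < ν := hν
  have hfin : DegWAux.base d ν Set.univ < ⊤ := DegWAux.base_univ_lt_top hd hν'
  have hzero : DegWAux.base d ν Set.univ ≠ 0 := DegWAux.base_univ_ne_zero
  set c : ℝ≥0∞ := (DegWAux.base d ν Set.univ)⁻¹ with hc
  have hc0 : c ≠ 0 := ENNReal.inv_ne_zero.mpr hfin.ne
  have hctop : c ≠ ⊤ := ENNReal.inv_ne_top.mpr hzero
  intro t1 ht1 t2 ht2 h12
  have ht1p : 0 < t1 := hτ0.trans ht1.1
  have ht2p : 0 < t2 := ht1p.trans h12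
  set S : ℝ → Set (EuclideanSpace ℝ (Fin d)) := fun t => {y | τ ≤ ⟪t • N, y⟫} with hS
  have hcont : ∀ x : EuclideanSpace ℝ (Fin d),
      Continuous fun y : EuclideanSpace ℝ (Fin d) => ⟪x, y⟫ :=
    fun x => continuous_const.inner continuous_id
  have hSmeas : ∀ t, MeasurableSet (S t) := fun t =>
    (isClosed_le continuous_const (hcont (t • N))).measurableSet
  have hmono : S t1 ⊆ S t2 := by
    intro y hy
    simp only [hS, Set.mem_setOf_eq, real_inner_smul_left] at hy ⊢
    have hi : 0 < ⟪N, y⟫ := by nlinarith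
    nlinarith
  -- the open slab
  set U : Set (EuclideanSpace ℝ (Fin d)) :=
    {y | ⟪N, y⟫ ∈ Set.Ioo (τ / t2) (τ / t1)} ∩ Metric.ball 0 1 with hU
  have hUopen : IsOpen U := ((isOpen_Ioo.preimage (hcont N)).inter Metric.isOpen_ball)
  have hfrac : τ / t2 < τ / t1 := div_lt_div_of_pos_left hτ0 ht1p h12
  have hfrac1 : τ / t1 < 1 := (div_lt_one ht1p).mpr ht1.1
  have hfrac0 : 0 < τ / t2 := div_pos hτ0 ht2p
  have hUne : U.Nonempty := by
    refine ⟨((τ / t2 + τ / t1) / 2) • N, ?_, ?_⟩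
    · have hinner : ⟪N, ((τ / t2 + τ / t1) / 2) • N⟫ = (τ / t2 + τ / t1) / 2 := by
        rw [real_inner_smul_right, real_inner_self_eq_norm_sq, hN]; ring
      simp only [Set.mem_setOf_eq, hinner, Set.mem_Ioo]
      constructor <;> linarith
    · rw [mem_ball_zero_iff, norm_smul, hN, mul_one,
        Real.norm_eq_abs, abs_of_pos (by linarith)]
      linarith
  have hUsub : U ⊆ Metric.ball 0 1 := Set.inter_subset_right
  have hUpos : 0 < DegWAux.base d ν U := DegWAux.base_open_pos hUopen hUne hUsub
  have hU2 : U ⊆ S t2 \ S t1 := by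
    rintro y ⟨⟨h1, h2⟩, -⟩
    constructor
    · simp only [hS, Set.mem_setOf_eq, real_inner_smul_left]
      have := (div_lt_iff₀ ht2p).mp h1
      nlinarith
    · simp only [hS, Set.mem_setOf_eq, real_inner_smul_left, not_le]
      have := (lt_div_iff₀ ht1p).mp h2
      nlinarith
  have hdisj : Disjoint (S t1) U := by
    refine Set.disjoint_left.mpr fun y hy hyU => ?_
    exact (hU2 hyU).2 hy
  have hlt : DegWAux.base d ν (S t1) < DegWAux.base d ν (S t2) := by
    have hne_top : DegWAux.base d ν (S t1) ≠ ⊤ :=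
      ((measure_mono (Set.subset_univ _)).trans_lt hfin).ne
    calc DegWAux.base d ν (S t1)
        < DegWAux.base d ν (S t1) + DegWAux.base d ν U :=
          ENNReal.lt_add_right hne_top hUpos.ne'
      _ = DegWAux.base d ν (S t1 ∪ U) :=
          (measure_union hdisj hUopen.measurableSet).symm
      _ ≤ DegWAux.base d ν (S t2) :=
          measure_mono (Set.union_subset hmono (hU2.trans Set.diff_subset))
  have happly : ∀ t : ℝ, degW d ν τ (t • N) = (c * DegWAux.base d ν (S t)).toReal := by
    intro t
    rw [degW, DegWAux.Fnu_eq, Measure.smul_apply, smul_eq_mul]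
  simp only [happly]
  have hne2 : c * DegWAux.base d ν (S t2) ≠ ⊤ :=
    ENNReal.mul_ne_top hctop ((measure_mono (Set.subset_univ _)).trans_lt hfin).ne
  have hne1 : c * DegWAux.base d ν (S t1) ≠ ⊤ :=
    ENNReal.mul_ne_top hctop ((measure_mono (Set.subset_univ _)).trans_lt hfin).ne
  rw [ENNReal.toReal_lt_toReal hne1 hne2]
  exact (ENNReal.mul_lt_mul_iff_right hc0 hctop).mpr hlt
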